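/- For every integer n ≥ 3 and every α ∈ (π/2, 3π/4 − π/(2n)), it holds that 2π − π/n − α < dgn_n(α) < 2π − α, where dgn_n(α) = π − arctan( cos²(π/n)·(sin(π/n)+1)⁻²·tan α ). -/

import Mathlib

set_option maxHeartbeats 1000000


open Real

noncomputable def dgn (n : ℕ) (α : ℝ) : ℝ :=
  π - Real.arctan ((Real.cos (π/n))^2 * ((Real.sin (π/n) + 1)^2)⁻¹ * Real.tan α)

theorem stmt6 (n : ℕ) (hn : 3 ≤ n) (α : ℝ)
    (h1 : π/2 < α) (h2 : α < 3*π/4 - π/(2*n)) :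
    2*π - π/n - α < dgn n α ∧ dgn n α < 2*π - α := by
  have hπ := Real.pi_pos
  have hn3 : (3:ℝ) ≤ (n:ℝ) := by exact_mod_cast hn
  have hn0 : (0:ℝ) < (n:ℝ) := by linarith
  set θ : ℝ := π / n with hθdef
  have hθpos : 0 < θ := div_pos hπ hn0
  have hθle : θ ≤ π / 3 := by
    rw [hθdef]
    apply div_le_div_of_nonneg_left (le_of_lt hπ) (by norm_num) hn3
  have hθlt : θ < π / 2 := by
    have : π / 3 < π / 2 := by linarith
    linarith
  -- rewrite h2 in terms of θ
  have h2' : α < 3*π/4 - θ/2 := by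
    have : π/(2*(n:ℝ)) = θ/2 := by rw [hθdef]; ring
    linarith [h2, this.symm.le]  -- adjust
  set x : ℝ := α - π with hxdef
  have hx1 : -(π/2) < x := by rw [hxdef]; linarith
  have hx2 : x < -(π/4) - θ/2 := by rw [hxdef]; linarith
  have hx0 : x < 0 := by linarith
  have hx2' : x < π/2 := by linarith
  have hxθ1 : -(π/2) < x + θ := by linarith
  have hxθ0 : x + θ < 0 := by linarith
  have hxθ2 : x + θ < π/2 := by linarith
  -- tan α = tan x
  have htan : Real.tan x = Real.tan α := by
    rw [hxdef]; exact Real.tan_periodic.sub_eq α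
  have htanneg : Real.tan x < 0 := Real.tan_neg_of_neg_of_pi_div_two_lt hx0 hx1
  -- trig values at θ
  have hcosθ : 0 < Real.cos θ := Real.cos_pos_of_mem_Ioo ⟨by linarith, hθlt⟩
  have hsinθ : 0 < Real.sin θ := Real.sin_pos_of_pos_of_lt_pi hθpos (by linarith)
  set s : ℝ := Real.sin θ with hsdef
  have hpythθ : Real.sin θ ^ 2 + Real.cos θ ^ 2 = 1 := Real.sin_sq_add_cos_sq θ
  have hs1 : s < 1 := by nlinarith
  -- c
  set c : ℝ := (Real.cos θ)^2 * ((Real.sin θ + 1)^2)⁻¹ with hcdef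
  have hs1pos : 0 < 1 + s := by linarith
  have hc : c = (1 - s) / (1 + s) := by
    rw [hcdef]
    rw [eq_div_iff (by linarith : (1:ℝ) + s ≠ 0)]
    have hne : Real.sin θ + 1 ≠ 0 := by linarith [hsdef]
    field_simp
    nlinarith [hpythθ, hsdef]
  have hc1 : c < 1 := by
    rw [hc, div_lt_one hs1pos]; linarith
  -- cos positivity
  have hcosx : 0 < Real.cos x := Real.cos_pos_of_mem_Ioo ⟨hx1, hx2'⟩
  have hcosxθ : 0 < Real.cos (x + θ) := Real.cos_pos_of_mem_Ioo ⟨hxθ1, hxθ2⟩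
  -- key: sin(2x+θ) > -1
  have hy1 : -π < 2*x + θ := by linarith
  have hy2 : 2*x + θ < -(π/2) := by linarith
  have hsy : Real.sin (2*x + θ) > -1 := by
    have h1' : 0 < (2*x + θ) + π := by linarith
    have h2' : (2*x + θ) + π < π/2 := by linarith
    have hlt : Real.sin ((2*x + θ) + π) < 1 := by
      calc Real.sin ((2*x + θ) + π) < Real.sin (π/2) :=
            Real.sin_lt_sin_of_lt_of_le_pi_div_two (by linarith) (le_refl _) h2'
        _ = 1 := Real.sin_pi_div_two
    rw [Real.sin_add_pi] at hlt
    linarith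
  -- key polynomial identity
  have hid : (1 + s) * Real.sin (x + θ) * Real.cos x
      - (1 - s) * Real.sin x * Real.cos (x + θ)
      = s * (1 + Real.sin (2*x + θ)) := by
    have e1 : Real.sin (2*x + θ) = Real.sin (2*x) * Real.cos θ + Real.cos (2*x) * Real.sin θ :=
      Real.sin_add _ _
    rw [Real.sin_add, Real.cos_add, e1, Real.sin_two_mul, Real.cos_two_mul, hsdef]
    have := Real.sin_sq_add_cos_sq x
    linear_combination (Real.sin θ - Real.sin θ^2) * this
  have hkeypos : 0 < s * (1 + Real.sin (2*x + θ)) := by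
    apply mul_pos hsinθ; linarith
  have hkey : (1 - s) * Real.sin x * Real.cos (x + θ)
      < (1 + s) * Real.sin (x + θ) * Real.cos x := by linarith
  -- deduce c * tan x < tan (x + θ)
  have hmain : c * Real.tan x < Real.tan (x + θ) := by
    rw [Real.tan_eq_sin_div_cos, Real.tan_eq_sin_div_cos, hc]
    rw [div_mul_div_comm, div_lt_div_iff₀ (by positivity) hcosxθ]
    nlinarith [hkey]
  -- lower bound
  have harctan_xθ : Real.arctan (Real.tan (x + θ)) = x + θ :=
    Real.arctan_tan hxθ1 hxθ2
  have hlow : Real.arctan (c * Real.tan α) < x + θ := by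
    have h := Real.arctan_strictMono hmain
    rw [harctan_xθ, htan] at h
    exact h
  -- upper bound
  have harctan_x : Real.arctan (Real.tan x) = x := Real.arctan_tan hx1 hx2'
  have hup : x < Real.arctan (c * Real.tan α) := by
    have hlt : Real.tan x < c * Real.tan x := by nlinarith
    have h := Real.arctan_strictMono hlt
    rw [harctan_x, htan] at h
    exact h
  constructor
  · show 2*π - θ - α < π - Real.arctan (c * Real.tan α)
    linarith [hlow, hxdef]
  · show π - Real.arctan (c * Real.tan α) < 2*π - α
    linarith [hup, hxdef]
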